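/- Every Dyck path with strictly increasing peak heights whose highest peak has height a ≥ 1 decomposes uniquely as u P₁ u P₂ u ⋯ u P_{a−1} u d^a, where each P_i is of the form d^j u^j with 0 ≤ j ≤ i. -/

import Mathlib

/-- Height of the vertex after the first `j` steps of the path `w`
(`true` = up-step `u`, `false` = down-step `d`). -/
def hgt (w : List Bool) (j : ℕ) : ℤ :=
  ((w.take j).count true : ℤ) - ((w.take j).count false : ℤ)

/-- `w` is a Dyck word: equally many `u`'s and `d`'s, and every prefix
has at least as many `u`'s as `d`'s. -/
def IsDyckWord (w : List Bool) : Prop :=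
  w.count true = w.count false ∧ ∀ j, 0 ≤ hgt w j

instance : DecidablePred IsDyckWord := fun w => by
  have : IsDyckWord w ↔ (w.count true = w.count false ∧
      ∀ j ∈ List.range (w.length + 1), 0 ≤ hgt w j) := by
    constructor
    · rintro ⟨h1, h2⟩; exact ⟨h1, fun j _ => h2 j⟩
    · rintro ⟨h1, h2⟩
      refine ⟨h1, fun j => ?_⟩
      rcases le_or_gt j w.length with h | h
      · exact h2 j (List.mem_range.mpr (Nat.lt_succ_of_le h))
      · have : w.take j = w := List.take_of_length_le h.le
        have hw : hgt w j = hgt w w.length := by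
          unfold hgt
          rw [this, List.take_of_length_le (le_refl _)]
        rw [hw]
        exact h2 w.length (List.mem_range.mpr (Nat.lt_succ_of_le (le_refl _)))
  exact decidable_of_iff' _ this

/-- there is a peak (an occurrence of `ud`) at positions `i, i+1`. -/
def isPeakB (w : List Bool) (i : ℕ) : Bool :=
  w.getD i false && !(w.getD (i+1) true)

/-- there is a valley (an occurrence of `du`) at positions `i, i+1`. -/
def isValleyB (w : List Bool) (i : ℕ) : Bool :=
  !(w.getD i true) && w.getD (i+1) false

/-- length of the maximal run of `u`'s ending at position `i`. -/
def upRunL (w : List Bool) (i : ℕ) : ℕ :=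
  ((List.range (i+1)).takeWhile (fun k => w.getD (i-k) false)).length

/-- length of the maximal run of `d`'s starting at position `i`. -/
def downRunR (w : List Bool) (i : ℕ) : ℕ :=
  ((List.range (w.length - i)).takeWhile (fun k => !(w.getD (i+k) true))).length

/-- length of the maximal run of `d`'s ending at position `i`. -/
def downRunL (w : List Bool) (i : ℕ) : ℕ :=
  ((List.range (i+1)).takeWhile (fun k => !(w.getD (i-k) true))).length

/-- length of the maximal run of `u`'s starting at position `i`. -/
def upRunR (w : List Bool) (i : ℕ) : ℕ :=
  ((List.range (w.length - i)).takeWhile (fun k => w.getD (i+k) false)).length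

/-- The peak at `i` is symmetric: its maximal mountain `u^a d^b` has `a = b`. -/
def isSymPeakB (w : List Bool) (i : ℕ) : Bool :=
  isPeakB w i && (upRunL w i == downRunR w (i+1))

/-- The peak at `i` is asymmetric: its maximal mountain `u^a d^b` has `a ≠ b`. -/
def isAsymPeakB (w : List Bool) (i : ℕ) : Bool :=
  isPeakB w i && !(upRunL w i == downRunR w (i+1))

/-- weight of the peak at `i`: `min a b` for its maximal mountain `u^a d^b`. -/
def peakWeight (w : List Bool) (i : ℕ) : ℕ :=
  min (upRunL w i) (downRunR w (i+1))

/-- The valley at `i` is symmetric: the maximal `d^a u^b` containing it has `a = b`. -/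
def isSymValleyB (w : List Bool) (i : ℕ) : Bool :=
  isValleyB w i && (downRunL w i == upRunR w (i+1))

/-- weight of the valley at `i`: the largest `j` with `d^j u^j` through the valley. -/
def valleyWeight (w : List Bool) (i : ℕ) : ℕ :=
  min (downRunL w i) (upRunR w (i+1))

def peakCount (w : List Bool) : ℕ := ((List.range w.length).filter (isPeakB w)).length
def spCount (w : List Bool) : ℕ := ((List.range w.length).filter (isSymPeakB w)).length
def apCount (w : List Bool) : ℕ := ((List.range w.length).filter (isAsymPeakB w)).length
def svalCount (w : List Bool) : ℕ := ((List.range w.length).filter (isSymValleyB w)).length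

/-- total weight of the symmetric peaks of `w`. -/
def spWeight (w : List Bool) : ℕ :=
  (((List.range w.length).filter (isSymPeakB w)).map (peakWeight w)).sum

/-- total weight of the asymmetric peaks of `w`. -/
def apWeight (w : List Bool) : ℕ :=
  (((List.range w.length).filter (isAsymPeakB w)).map (peakWeight w)).sum

/-- total weight of the symmetric valleys of `w`. -/
def svWeight (w : List Bool) : ℕ :=
  (((List.range w.length).filter (isSymValleyB w)).map (valleyWeight w)).sum

/-- positions of the peaks of `w`, from left to right. -/
def peakList (w : List Bool) : List ℕ := (List.range w.length).filter (isPeakB w)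

/-- positions of the valleys of `w`, from left to right. -/
def valleyList (w : List Bool) : List ℕ := (List.range w.length).filter (isValleyB w)

/-- heights of the peaks of `w`, from left to right. -/
def peakHeights (w : List Bool) : List ℤ := (peakList w).map (fun i => hgt w (i+1))

/-- heights of the valleys of `w`, from left to right. -/
def valleyHeights (w : List Bool) : List ℤ := (valleyList w).map (fun i => hgt w (i+1))

/-- number of pairs of adjacent equal entries of a list. -/
def eqAdjCount (l : List ℤ) : ℕ :=
  ((l.zip l.tail).filter (fun p => decide (p.1 = p.2))).length

/-- `sp'`: number of pairs of consecutive valleys of `w` at the same height. -/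
def spPrime (w : List Bool) : ℕ := eqAdjCount (valleyHeights w)

/-- all Bool lists of length `m`, as a Finset. -/
def boolLists (m : ℕ) : Finset (List Bool) :=
  Finset.image (fun f : Fin m → Bool => List.ofFn f) Finset.univ

/-- The (finite) set of Dyck words of semilength `n`. -/
def dyckFinset (n : ℕ) : Finset (List Bool) :=
  (boolLists (2*n)).filter (fun w => IsDyckWord w)

/-- the pit `d^j u^j`. -/
def pit (j : ℕ) : List Bool := List.replicate j false ++ List.replicate j true

/-- the path `u P₁ u P₂ ⋯ u P_{a−1} u d^a`, where `P_i` is the pit `d^{j_i} u^{j_i}`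
given by the list `js = [j₁, …, j_{a−1}]`. -/
def buildIncr (js : List ℕ) (a : ℕ) : List Bool :=
  [true] ++ (js.map (fun j => pit j ++ [true])).flatten ++ List.replicate a false

namespace Aux19

def val (b : Bool) : ℤ := if b then 1 else -1

lemma count_sub_count (l : List Bool) :
    ((l.count true : ℤ) - l.count false) = (l.map val).sum := by
  induction l with
  | nil => simp
  | cons b t ih =>
    cases b <;> simp [List.count_cons, val] at * <;> push_cast <;> linarith

lemma hgt_eq (w : List Bool) (j : ℕ) : hgt w j = ((w.take j).map val).sum := by
  rw [hgt, count_sub_count]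

lemma hgt_zero (w : List Bool) : hgt w 0 = 0 := by simp [hgt]

lemma hgt_take (w : List Bool) (T j : ℕ) (h : j ≤ T) : hgt (w.take T) j = hgt w j := by
  simp [hgt_eq, List.take_take, Nat.min_eq_left h]

lemma hgt_append_le (x z : List Bool) (j : ℕ) (h : j ≤ x.length) :
    hgt (x ++ z) j = hgt x j := by
  simp [hgt_eq, List.take_append_of_le_length h]

lemma hgt_append_ge (x z : List Bool) (j : ℕ) :
    hgt (x ++ z) (x.length + j) = hgt x x.length + hgt z j := by
  simp [hgt_eq, List.take_append]
  rw [List.take_of_length_le (by simp)]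

lemma hgt_succ (w : List Bool) (j : ℕ) (h : j < w.length) :
    hgt w (j+1) = hgt w j + val w[j] := by
  have ht : w.take (j+1) = w.take j ++ [w[j]] := by
    rw [List.take_succ, List.getElem?_eq_getElem h]; rfl
  rw [hgt_eq, hgt_eq, ht, List.map_append, List.sum_append]; simp

lemma hgt_length_take (w : List Bool) (T : ℕ) (h : T ≤ w.length) :
    hgt (w.take T) (w.take T).length = hgt w T := by
  rw [List.length_take, Nat.min_eq_left h, hgt_take _ _ _ le_rfl]

lemma hgt_of_ge (w : List Bool) (j : ℕ) (h : w.length ≤ j) :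
    hgt w j = hgt w w.length := by
  rw [hgt, hgt, List.take_of_length_le h, List.take_of_length_le le_rfl]

lemma val_cases (b : Bool) : val b = 1 ∧ b = true ∨ val b = -1 ∧ b = false := by
  cases b <;> simp [val]

lemma hgt_replicate_false (n j : ℕ) : hgt (List.replicate n false) j = -(min j n : ℤ) := by
  simp [hgt_eq, List.take_replicate, val]

lemma hgt_replicate_true (n j : ℕ) : hgt (List.replicate n true) j = (min j n : ℤ) := by
  simp [hgt_eq, List.take_replicate, val]

lemma pit_length (j : ℕ) : (pit j).length = 2 * j := by simp [pit]; ring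

lemma hgt_pit_le (j k : ℕ) : hgt (pit j) k ≤ 0 := by
  rcases le_or_gt k j with h | h
  · rw [pit, hgt_append_le _ _ _ (by simpa using h), hgt_replicate_false]
    simp
  · obtain ⟨m, rfl⟩ := Nat.exists_eq_add_of_le h.le
    rw [pit, show j + m = (List.replicate j false).length + m by simp,
      hgt_append_ge, hgt_replicate_false, hgt_replicate_true]
    simp only [List.length_replicate]
    omega

lemma hgt_pit_end (j : ℕ) : hgt (pit j) (2*j) = 0 := by
  rw [pit, show 2*j = (List.replicate j false).length + j by simp; ring,
    hgt_append_ge, hgt_replicate_false, hgt_replicate_true]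
  simp

lemma isPeakB_true_iff (w : List Bool) (i : ℕ) :
    isPeakB w i = true ↔ i + 1 < w.length ∧ w.getD i false = true ∧ w.getD (i+1) true = false := by
  constructor
  · intro h
    rw [isPeakB, Bool.and_eq_true, Bool.not_eq_true'] at h
    refine ⟨?_, h.1, h.2⟩
    by_contra hlen
    rw [List.getD_eq_default w true (n := i+1) (by omega)] at h
    exact absurd h.2 (by simp)
  · rintro ⟨h1, h2, h3⟩
    rw [isPeakB, Bool.and_eq_true, Bool.not_eq_true']
    exact ⟨h2, h3⟩

lemma isPeakB_elem (w : List Bool) (i : ℕ) (h : isPeakB w i = true) :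
    ∃ (hl : i + 1 < w.length), w[i] = true ∧ w[i+1] = false := by
  rw [isPeakB_true_iff] at h
  obtain ⟨h1, h2, h3⟩ := h
  refine ⟨h1, ?_, ?_⟩
  · rw [List.getD_eq_getElem _ _ (by omega)] at h2; exact h2
  · rw [List.getD_eq_getElem _ _ (by omega)] at h3; exact h3

lemma isPeakB_of_elem (w : List Bool) (i : ℕ) (hl : i + 1 < w.length)
    (h1 : w[i] = true) (h2 : w[i+1] = false) : isPeakB w i = true := by
  rw [isPeakB_true_iff]
  exact ⟨hl, by rw [List.getD_eq_getElem _ _ (by omega)]; exact h1,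
    by rw [List.getD_eq_getElem _ _ hl]; exact h2⟩

end Aux19
namespace Aux19

def buildLeft (js : List ℕ) : List Bool :=
  [true] ++ (js.map (fun j => pit j ++ [true])).flatten

lemma buildIncr_eq (js : List ℕ) (a : ℕ) :
    buildIncr js a = buildLeft js ++ List.replicate a false := by
  simp [buildIncr, buildLeft]

lemma buildLeft_nil : buildLeft [] = [true] := rfl

lemma buildLeft_snoc (s : List ℕ) (j : ℕ) :
    buildLeft (s ++ [j]) = buildLeft s ++ (pit j ++ [true]) := by
  simp [buildLeft]

lemma bl_end (s : List ℕ) :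
    hgt (buildLeft s) (buildLeft s).length = 1 + s.length := by
  induction s using List.reverseRecOn with
  | nil => simp [buildLeft_nil, hgt_eq, val]
  | append_singleton s j ih =>
    rw [buildLeft_snoc]
    have hlen : (buildLeft s ++ (pit j ++ [true])).length
        = (buildLeft s).length + (2*j + 1) := by
      simp [pit_length]
    rw [hlen, hgt_append_ge]
    have h2 : hgt (pit j ++ [true]) (2*j+1) = 1 := by
      rw [show 2*j+1 = (pit j).length + 1 by rw [pit_length], hgt_append_ge,
        pit_length, hgt_pit_end]
      simp [hgt_eq, val]
    rw [ih, h2]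
    simp only [List.length_append, List.length_singleton]
    push_cast; ring

lemma bl_lt (s : List ℕ) (k : ℕ) (hk : k < (buildLeft s).length) :
    hgt (buildLeft s) k < 1 + s.length := by
  induction s using List.reverseRecOn generalizing k with
  | nil =>
    have hk0 : k = 0 := by simpa [buildLeft_nil] using hk
    subst hk0
    rw [hgt_zero]
    norm_num
  | append_singleton s j ih =>
    rw [buildLeft_snoc] at hk ⊢
    have hlen : (buildLeft s ++ (pit j ++ [true])).length
        = (buildLeft s).length + (2*j + 1) := by simp [pit_length]
    rw [hlen] at hk
    rcases lt_or_ge k (buildLeft s).length with h | h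
    · rw [hgt_append_le _ _ _ h.le]
      have := ih k h
      simp only [List.length_append, List.length_singleton]
      push_cast at this ⊢; omega
    · obtain ⟨m, rfl⟩ := Nat.exists_eq_add_of_le h
      rw [hgt_append_ge, bl_end]
      have hm : m ≤ 2*j := by omega
      have : hgt (pit j ++ [true]) m = hgt (pit j) m := by
        rw [hgt_append_le _ _ _ (by rw [pit_length]; exact hm)]
      rw [this]
      have := hgt_pit_le j m
      simp only [List.length_append, List.length_singleton]
      push_cast; omega

lemma no_peak_shape (s : List Bool) (h : ∀ k, isPeakB s k = false) :
    ∃ p q, s = List.replicate p false ++ List.replicate q true := by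
  induction s with
  | nil => exact ⟨0, 0, by simp⟩
  | cons b t ih =>
    have ht : ∀ k, isPeakB t k = false := by
      intro k
      have := h (k+1)
      simpa [isPeakB, List.getD_cons_succ] using this
    obtain ⟨p, q, hpq⟩ := ih ht
    cases b with
    | false => exact ⟨p+1, q, by simp [hpq, List.replicate_succ]⟩
    | true =>
      cases p with
      | zero => exact ⟨0, q+1, by simp [hpq, List.replicate_succ]⟩
      | succ p' =>
        exfalso
        have h0 := h 0
        rw [hpq] at h0
        simp [isPeakB, List.replicate_succ] at h0

lemma exists_peak (y : List Bool) (k : ℕ) (hk : k ≤ y.length)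
    (hpos : 0 < hgt y k) (hlt : hgt y y.length < hgt y k) :
    ∃ i, isPeakB y i = true ∧ hgt y k ≤ hgt y (i+1) := by
  obtain ⟨j₀, hj₀mem, hj₀⟩ := Finset.exists_max_image (Finset.range (y.length+1))
    (hgt y) ⟨0, by simp⟩
  set M := hgt y j₀ with hM
  have hmax : ∀ j, j ≤ y.length → hgt y j ≤ M := fun j hj =>
    hj₀ j (Finset.mem_range.mpr (by omega))
  have hj₀le : j₀ ≤ y.length := by
    have := Finset.mem_range.mp hj₀mem; omega
  set m := Nat.findGreatest (fun j => M ≤ hgt y j) y.length with hm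
  have hmm : M ≤ hgt y m :=
    Nat.findGreatest_spec (P := fun j => M ≤ hgt y j) hj₀le (le_refl M)
  have hmle : m ≤ y.length := Nat.findGreatest_le _
  have hmEq : hgt y m = M := le_antisymm (hmax m hmle) hmm
  have hgr : ∀ j, m < j → j ≤ y.length → hgt y j < M := by
    intro j h1 h2
    have := Nat.findGreatest_is_greatest h1 h2
    simp only [not_le] at this
    exact this
  have hkM : hgt y k ≤ M := hmax k hk
  have hm0 : m ≠ 0 := by
    intro h0
    rw [h0, hgt_zero] at hmEq
    omega
  have hmlt : m < y.length := by
    rcases eq_or_lt_of_le hmle with h | h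
    · exfalso; rw [h] at hmEq; omega
    · exact h
  -- step out of m is down
  have hstep1 : hgt y (m+1) = hgt y m + val y[m] := hgt_succ y m hmlt
  have hdown : y[m] = false := by
    rcases val_cases y[m] with ⟨hv, hb⟩ | ⟨hv, hb⟩
    · exfalso
      have := hgr (m+1) (by omega) (by omega)
      rw [hstep1, hv, hmEq] at this; omega
    · exact hb
  -- step into m is up
  have hm1lt : m - 1 < y.length := by omega
  have hstep2 : hgt y (m-1+1) = hgt y (m-1) + val y[m-1] := hgt_succ y (m-1) hm1lt
  rw [show m - 1 + 1 = m by omega] at hstep2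
  have hup : y[m-1] = true := by
    rcases val_cases y[m-1] with ⟨hv, hb⟩ | ⟨hv, hb⟩
    · exact hb
    · exfalso
      have := hmax (m-1) (by omega)
      rw [hv] at hstep2; rw [hmEq] at hstep2; omega
  refine ⟨m-1, isPeakB_of_elem y (m-1) (by omega) hup ?_, ?_⟩
  · have e : m - 1 + 1 = m := by omega
    simpa only [e] using hdown
  · rw [show m - 1 + 1 = m by omega, hmEq]; exact hkM

end Aux19
namespace Aux19

lemma peak_snoc (x : List Bool) (i : ℕ) :
    isPeakB (x ++ [true]) i = true ↔ isPeakB x i = true := by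
  constructor
  · intro h
    obtain ⟨hl, h1, h2⟩ := isPeakB_elem _ _ h
    have hlen : i + 1 < x.length + 1 := by simpa using hl
    have hi1 : i + 1 < x.length := by
      by_contra hc
      have he : i + 1 = x.length := by omega
      rw [List.getElem_append_right (by omega)] at h2
      simp [he] at h2
    refine isPeakB_of_elem x i hi1 ?_ ?_
    · rw [List.getElem_append_left (by omega)] at h1; exact h1
    · rw [List.getElem_append_left (by omega)] at h2; exact h2
  · intro h
    obtain ⟨hl, h1, h2⟩ := isPeakB_elem _ _ h
    refine isPeakB_of_elem _ i (by simp; omega) ?_ ?_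
    · rw [List.getElem_append_left (by omega)]; exact h1
    · rw [List.getElem_append_left hl]; exact h2

lemma peak_take (y : List Bool) (T i : ℕ) (hT : T ≤ y.length) :
    isPeakB (y.take T) i = true ↔ (i + 1 < T ∧ isPeakB y i = true) := by
  have hlt : (y.take T).length = T := by simp [List.length_take]; omega
  constructor
  · intro h
    obtain ⟨hl, h1, h2⟩ := isPeakB_elem _ _ h
    rw [hlt] at hl
    rw [List.getElem_take] at h1 h2
    exact ⟨hl, isPeakB_of_elem y i (by omega) h1 h2⟩
  · rintro ⟨hi, h⟩
    obtain ⟨hl, h1, h2⟩ := isPeakB_elem _ _ h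
    refine isPeakB_of_elem _ i (by omega) ?_ ?_
    · rw [List.getElem_take]; exact h1
    · rw [List.getElem_take]; exact h2

lemma key : ∀ (n : ℕ) (y : List Bool) (b : ℕ), y.length ≤ n → 1 ≤ b →
    (∀ j, 0 ≤ hgt y j) →
    hgt y y.length = (b : ℤ) →
    (∀ i i', isPeakB y i = true → isPeakB y i' = true → i < i' →
      hgt y (i+1) < hgt y (i'+1)) →
    (∀ i, isPeakB y i = true → hgt y (i+1) < (b : ℤ)) →
    ∃! js : List ℕ, js.length = b - 1 ∧ (∀ i < js.length, js.getD i 0 ≤ i + 1) ∧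
      y = buildLeft js := by
  intro n
  induction n using Nat.strong_induction_on with
  | _ n IH =>
  intro y b hn hb h0 hend hpw hbd
  have hne : y ≠ [] := by
    intro h
    subst h
    simp [hgt_zero] at hend
    omega
  rcases List.eq_nil_or_concat y with rfl | ⟨y', c, rfl⟩
  · exact absurd rfl hne
  rw [List.concat_eq_append] at *
  clear hne
  have hylen : (y' ++ [c]).length = y'.length + 1 := by simp
  have hgt_left : ∀ j ≤ y'.length, hgt (y' ++ [c]) j = hgt y' j :=
    fun j hj => hgt_append_le y' [c] j hj
  have hgt_end : hgt (y' ++ [c]) (y' ++ [c]).length = hgt y' y'.length + val c := by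
    rw [hylen, show y'.length + 1 = y'.length + 1 from rfl, hgt_append_ge]
    simp [hgt_eq, val]
  -- last step is up
  have hc : c = true := by
    rcases val_cases c with ⟨hv, hbt⟩ | ⟨hv, hbf⟩
    · exact hbt
    exfalso
    have h1 : hgt (y' ++ [c]) y'.length = (b : ℤ) + 1 := by
      rw [hgt_left _ le_rfl]
      rw [hgt_end, hv] at hend
      omega
    obtain ⟨i, hpk, hge⟩ := exists_peak (y' ++ [c]) y'.length (by omega)
      (by rw [h1]; positivity) (by rw [h1, hend]; omega)
    have := hbd i hpk
    omega
  subst hc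
  have hend' : hgt y' y'.length = (b : ℤ) - 1 := by
    rw [hgt_end] at hend
    simp [val] at hend
    omega
  have h0' : ∀ j, 0 ≤ hgt y' j := by
    intro j
    rcases le_or_gt j y'.length with h | h
    · rw [← hgt_left _ h]; exact h0 j
    · rw [hgt_of_ge y' j h.le, hend']
      push_cast; omega
  -- peak transfer
  have hpk_iff : ∀ i, isPeakB y' i = true ↔ isPeakB (y' ++ [true]) i = true :=
    fun i => (peak_snoc y' i).symm
  have hpkh : ∀ i, isPeakB y' i = true → hgt (y' ++ [true]) (i+1) = hgt y' (i+1) := by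
    intro i h
    obtain ⟨hl, _, _⟩ := isPeakB_elem _ _ h
    exact hgt_left _ (by omega)
  have hpw' : ∀ i i', isPeakB y' i = true → isPeakB y' i' = true → i < i' →
      hgt y' (i+1) < hgt y' (i'+1) := by
    intro i i' h h' hii
    have := hpw i i' ((hpk_iff i).mp h) ((hpk_iff i').mp h') hii
    rwa [hpkh i h, hpkh i' h'] at this
  have hbd' : ∀ i, isPeakB y' i = true → hgt y' (i+1) < (b : ℤ) := by
    intro i h
    have := hbd i ((hpk_iff i).mp h)
    rwa [hpkh i h] at this
  rcases eq_or_lt_of_le hb with hb1 | hb2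
  · -- b = 1
    have hb1 : b = 1 := hb1.symm
    subst hb1
    have hy'nil : y' = [] := by
      by_contra hne'
      have hlen1 : 1 ≤ y'.length := by
        cases y' with
        | nil => exact absurd rfl hne'
        | cons _ _ => simp
      have hall : ∀ k ≤ y'.length, hgt y' k ≤ 0 := by
        intro k hk
        by_contra hc
        push_neg at hc
        obtain ⟨i, hpk, hge⟩ := exists_peak y' k hk hc (by rw [hend']; push_cast; omega)
        have := hbd' i hpk
        push_cast at this
        omega
      have h1 := hall 1 hlen1
      have h2 := h0' 1
      have h3 : hgt y' 1 = 0 := le_antisymm h1 h2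
      have h4 : hgt y' 1 = hgt y' 0 + val y'[0] := hgt_succ y' 0 (by omega)
      rw [hgt_zero, h3] at h4
      rcases val_cases y'[0] with ⟨hv, _⟩ | ⟨hv, _⟩ <;> rw [hv] at h4 <;> omega
    subst hy'nil
    refine ⟨[], ⟨rfl, by intro i hi; simp at hi, rfl⟩, ?_⟩
    rintro js ⟨hjs, _, _⟩
    exact List.length_eq_zero_iff.mp hjs
  · -- b ≥ 2
    have hb2' : 2 ≤ b := hb2
    have hPex : ∃ j, j ≤ y'.length ∧ hgt y' j = (b : ℤ) - 1 := ⟨y'.length, le_rfl, hend'⟩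
    set T := Nat.find hPex with hTdef
    obtain ⟨hTle, hgtT⟩ := Nat.find_spec hPex
    rw [← hTdef] at hTle hgtT
    have hTmin : ∀ j < T, j ≤ y'.length → hgt y' j ≠ (b : ℤ) - 1 := by
      intro j hj hjle hEq
      rw [hTdef] at hj
      exact Nat.find_min hPex hj ⟨hjle, hEq⟩
    have hmax' : ∀ k ≤ y'.length, hgt y' k ≤ (b : ℤ) - 1 := by
      intro k hk
      by_contra hcon
      push_neg at hcon
      have hkb : (b : ℤ) ≤ hgt y' k := by omega
      obtain ⟨i, hpk, hge⟩ := exists_peak y' k hk (by push_cast at hkb ⊢; omega)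
        (by rw [hend']; omega)
      have := hbd' i hpk
      omega
    have hT1 : 1 ≤ T := by
      rcases Nat.eq_zero_or_pos T with h | h
      · exfalso
        rw [h, hgt_zero] at hgtT
        omega
      · exact h
    have hm1 : T - 1 < y'.length := by omega
    have hstepT : hgt y' T = hgt y' (T-1) + val (y'[T-1]'hm1) := by
      have := hgt_succ y' (T-1) hm1
      rw [show T - 1 + 1 = T by omega] at this
      exact this
    have hupT : (y'[T-1]'hm1) = true := by
      rcases val_cases (y'[T-1]'hm1) with ⟨hv, hbb⟩ | ⟨hv, hbb⟩
      · exact hbb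
      · exfalso
        rw [hv, hgtT] at hstepT
        have := hmax' (T-1) (by omega)
        omega
    set z := y'.take T with hzdef
    set s := y'.drop T with hsdef
    have hzs : z ++ s = y' := List.take_append_drop T y'
    have hzlen : z.length = T := by simp [hzdef, List.length_take]; omega
    have hslen : s.length = y'.length - T := by simp [hsdef]
    have hgt_z : ∀ j ≤ T, hgt z j = hgt y' j := fun j hj => hgt_take y' T j hj
    have hgt_s : ∀ j, hgt y' (T + j) = ((b : ℤ) - 1) + hgt s j := by
      intro j
      conv_lhs => rw [← hzs]
      rw [show T + j = z.length + j by omega, hgt_append_ge]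
      rw [hzlen, hgt_z T le_rfl, hgtT]
    -- no peaks in s
    have hnps : ∀ k, isPeakB s k = false := by
      intro k
      by_contra hcon
      have hpk : isPeakB s k = true := by
        cases h : isPeakB s k
        · exact absurd h hcon
        · rfl
      obtain ⟨hl, h1, h2⟩ := isPeakB_elem _ _ hpk
      rw [List.getElem_drop] at h1 h2
      have hTlt : T < y'.length := by
        have : k + 1 < s.length := hl
        omega
      have hkl : T + k + 1 < y'.length := by
        have : k + 1 < s.length := hl
        omega
      have hpk' : isPeakB y' (T + k) = true := by
        refine isPeakB_of_elem y' (T+k) hkl h1 ?_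
        have : y'[T + (k+1)]'(by omega) = false := h2
        simpa [show T + (k+1) = T + k + 1 by omega] using this
      -- downstep after T
      have hdnT : y'[T]'(hTlt) = false := by
        rcases val_cases (y'[T]'hTlt) with ⟨hv, hbb⟩ | ⟨hv, hbb⟩
        · exfalso
          have hstep := hgt_succ y' T hTlt
          rw [hv, hgtT] at hstep
          have := hmax' (T+1) (by omega)
          omega
        · exact hbb
      have hpkT : isPeakB y' (T-1) = true := by
        refine isPeakB_of_elem y' (T-1) (by omega) hupT ?_
        simpa [show T - 1 + 1 = T by omega] using hdnT
      have := hpw' (T-1) (T+k) hpkT hpk' (by omega)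
      rw [show T - 1 + 1 = T by omega, hgtT] at this
      have hle := hmax' (T + k + 1) (by omega)
      omega
    obtain ⟨p, q, hspq⟩ := no_peak_shape s hnps
    -- q = p
    have hsend : hgt s s.length = 0 := by
      have := hgt_s s.length
      rw [show T + s.length = y'.length by omega, hend'] at this
      omega
    have hqp : q = p := by
      have hlen2 : s.length = p + q := by simp [hspq]
      have hsum : hgt s (p + q) = -(p : ℤ) + q := by
        rw [hspq, show p + q = (List.replicate p false).length + q by simp,
          hgt_append_ge, hgt_replicate_false, hgt_replicate_true]
        simp
      rw [← hlen2, hsend] at hsum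
      omega
    rw [hqp] at hspq
    have hspit : s = pit p := by rw [hspq, pit]
    -- p ≤ b - 1
    have hpb : (p : ℤ) ≤ (b : ℤ) - 1 := by
      have h1 : hgt s p = -(p : ℤ) := by
        rw [hspq, hgt_append_le _ _ _ (by simp), hgt_replicate_false]
        simp
      have h2 := h0' (T + p)
      rw [hgt_s p, h1] at h2
      omega
    -- z hypotheses for IH
    have hzend : hgt z z.length = ((b - 1 : ℕ) : ℤ) := by
      rw [hzlen, hgt_z T le_rfl, hgtT]
      push_cast
      omega
    have h0z : ∀ j, 0 ≤ hgt z j := by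
      intro j
      rcases le_or_gt j T with h | h
      · rw [hgt_z j h]; exact h0' j
      · rw [hgt_of_ge z j (by omega), hzend]
        positivity
    have hpkz : ∀ i, isPeakB z i = true ↔ (i + 1 < T ∧ isPeakB y' i = true) :=
      fun i => peak_take y' T i hTle
    have hgtz_pk : ∀ i, i + 1 ≤ T → hgt z (i+1) = hgt y' (i+1) := fun i h => hgt_z (i+1) h
    have hpwz : ∀ i i', isPeakB z i = true → isPeakB z i' = true → i < i' →
        hgt z (i+1) < hgt z (i'+1) := by
      intro i i' h h' hii
      obtain ⟨hi1, hy1⟩ := (hpkz i).mp h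
      obtain ⟨hi2, hy2⟩ := (hpkz i').mp h'
      rw [hgtz_pk i (by omega), hgtz_pk i' (by omega)]
      exact hpw' i i' hy1 hy2 hii
    have hbdz : ∀ i, isPeakB z i = true → hgt z (i+1) < ((b - 1 : ℕ) : ℤ) := by
      intro i h
      obtain ⟨hi1, hy1⟩ := (hpkz i).mp h
      rw [hgtz_pk i (by omega)]
      have h1 := hmax' (i+1) (by omega)
      have h2 := hTmin (i+1) hi1 (by omega)
      push_cast
      omega
    have hblt : 1 ≤ b - 1 := by omega
    have hIH := IH (n - 1) (by omega) z (b - 1) (by omega) hblt h0z hzend hpwz hbdz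
    obtain ⟨s₀, ⟨hs₀len, hs₀bd, hs₀eq⟩, hs₀uniq⟩ := hIH
    have hs₀len' : s₀.length = b - 2 := by omega
    -- construct js
    refine ⟨s₀ ++ [p], ⟨?_, ?_, ?_⟩, ?_⟩
    · simp [hs₀len']; omega
    · intro i hi
      simp only [List.length_append, List.length_singleton] at hi
      rcases lt_or_ge i s₀.length with h | h
      · rw [List.getD_append _ _ _ _ h]
        exact hs₀bd i h
      · have hieq : i = s₀.length := by omega
        subst hieq
        rw [List.getD_eq_getElem _ _ (by simp), List.getElem_append_right le_rfl]
        simp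
        omega
    · rw [buildLeft_snoc, ← hs₀eq, ← hspit, ← List.append_assoc, hzs]
    · rintro js₂ ⟨hlen₂, hbd₂, heq₂⟩
      rcases List.eq_nil_or_concat js₂ with rfl | ⟨s₂, j₂, rfl⟩
      · simp at hlen₂; omega
      rw [List.concat_eq_append] at *
      rw [buildLeft_snoc] at heq₂
      have heq₃ : y' = buildLeft s₂ ++ pit j₂ := by
        have : (y' ++ [true]) = (buildLeft s₂ ++ pit j₂) ++ [true] := by
          rw [heq₂, List.append_assoc]
        exact List.append_cancel_right this
      have hs₂len : s₂.length = b - 2 := by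
        simp at hlen₂
        omega
      set B₂ := buildLeft s₂ with hB₂
      have hB₂end : hgt B₂ B₂.length = (b : ℤ) - 1 := by
        rw [bl_end, hs₂len]
        push_cast
        omega
      have hB₂lt : ∀ k < B₂.length, hgt B₂ k < (b : ℤ) - 1 := by
        intro k hk
        have := bl_lt s₂ k hk
        rw [hs₂len, ← hB₂] at this
        push_cast at this ⊢
        omega
      have hL₂le : B₂.length ≤ y'.length := by
        rw [heq₃]
        simp
      have hgtL₂ : hgt y' B₂.length = (b : ℤ) - 1 := by
        rw [heq₃, hgt_append_le _ _ _ le_rfl, hB₂end]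
      have hTL : T = B₂.length := by
        have h1 : T ≤ B₂.length := by
          rw [hTdef]
          exact Nat.find_min' hPex ⟨hL₂le, hgtL₂⟩
        rcases eq_or_lt_of_le h1 with h | h
        · exact h
        · exfalso
          have h2 : hgt y' T = hgt B₂ T := by
            rw [heq₃, hgt_append_le _ _ _ h.le]
          rw [hgtT] at h2
          have := hB₂lt T h
          omega
      have hzB : z = B₂ := by
        rw [hzdef, heq₃, hTL, List.take_left]
      have hsp : pit j₂ = pit p := by
        rw [← hspit, hsdef, heq₃, hTL, List.drop_left]
      have hj₂ : j₂ = p := by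
        have : (pit j₂).length = (pit p).length := by rw [hsp]
        rw [pit_length, pit_length] at this
        omega
      have hs₂bd : ∀ i < s₂.length, s₂.getD i 0 ≤ i + 1 := by
        intro i hi
        have := hbd₂ i (by simp; omega)
        rwa [List.getD_append _ _ _ _ hi] at this
      have hs₂eq : s₂ = s₀ := hs₀uniq s₂ ⟨by omega, hs₂bd, hzB.trans hB₂⟩
      rw [hs₂eq, hj₂]

end Aux19
namespace Aux19

lemma pairwise_peaks (w : List Bool) (hinc : (peakHeights w).Pairwise (· < ·)) :
    ∀ i i', isPeakB w i = true → isPeakB w i' = true → i < i' →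
      hgt w (i+1) < hgt w (i'+1) := by
  intro i i' hi hi' hii
  have hmemi : i ∈ peakList w := by
    obtain ⟨hl, _, _⟩ := isPeakB_elem _ _ hi
    exact List.mem_filter.mpr ⟨List.mem_range.mpr (by omega), hi⟩
  have hmemi' : i' ∈ peakList w := by
    obtain ⟨hl, _, _⟩ := isPeakB_elem _ _ hi'
    exact List.mem_filter.mpr ⟨List.mem_range.mpr (by omega), hi'⟩
  have hsorted : (peakList w).Pairwise (· < ·) :=
    List.Pairwise.filter _ (List.pairwise_lt_range)
  have hpm : (peakList w).Pairwise (fun x y => hgt w (x+1) < hgt w (y+1)) := by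
    rw [peakHeights, List.pairwise_map] at hinc
    exact hinc
  obtain ⟨ia, hia, rfl⟩ := List.mem_iff_getElem.mp hmemi
  obtain ⟨ib, hib, rfl⟩ := List.mem_iff_getElem.mp hmemi'
  rcases lt_trichotomy ia ib with h | h | h
  · exact (List.pairwise_iff_getElem.mp hpm) ia ib hia hib h
  · subst h; omega
  · have := (List.pairwise_iff_getElem.mp hsorted) ib ia hib hia h
    omega

lemma mem_peakHeights (w : List Bool) (h : ℤ) :
    h ∈ peakHeights w ↔ ∃ i, isPeakB w i = true ∧ hgt w (i+1) = h := by
  rw [peakHeights, List.mem_map]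
  constructor
  · rintro ⟨i, hmem, rfl⟩
    exact ⟨i, (List.mem_filter.mp hmem).2, rfl⟩
  · rintro ⟨i, hpk, rfl⟩
    obtain ⟨hl, _, _⟩ := isPeakB_elem _ _ hpk
    exact ⟨i, List.mem_filter.mpr ⟨List.mem_range.mpr (by omega), hpk⟩, rfl⟩

end Aux19

open Aux19 in
/-- Every Dyck path with strictly increasing peak heights whose
highest peak has height `a ≥ 1` decomposes uniquely as
`u P₁ u P₂ ⋯ u P_{a−1} u d^a` with each `P_i = d^{j_i} u^{j_i}`, `0 ≤ j_i ≤ i`. -/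
theorem strictly_increasing_peaks_decomposition (w : List Bool) (hw : IsDyckWord w)
    (a : ℕ) (ha : 1 ≤ a)
    (hinc : (peakHeights w).Pairwise (· < ·))
    (hmem : (a : ℤ) ∈ peakHeights w)
    (hmax : ∀ h ∈ peakHeights w, h ≤ (a : ℤ)) :
    ∃! js : List ℕ,
      js.length = a - 1 ∧ (∀ i < js.length, js.getD i 0 ≤ i + 1) ∧
      w = buildIncr js a := by
  obtain ⟨hcnt, h0⟩ := hw
  have hend0 : hgt w w.length = 0 := by
    rw [hgt, List.take_of_length_le le_rfl, hcnt]
    ring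
  have hpw := pairwise_peaks w hinc
  obtain ⟨i₀, hpk₀, hgt₀⟩ := (mem_peakHeights w a).mp hmem
  have hbd : ∀ i, isPeakB w i = true → hgt w (i+1) ≤ (a : ℤ) := by
    intro i hi
    exact hmax _ ((mem_peakHeights w _).mpr ⟨i, hi, rfl⟩)
  have hlast : ∀ i, isPeakB w i = true → i ≤ i₀ := by
    intro i hi
    by_contra hc
    push_neg at hc
    have := hpw i₀ i hpk₀ hi hc
    rw [hgt₀] at this
    have := hbd i hi
    omega
  obtain ⟨hl₀, _, _⟩ := isPeakB_elem _ _ hpk₀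
  set y := w.take (i₀ + 1) with hydef
  set s := w.drop (i₀ + 1) with hsdef
  have hys : y ++ s = w := List.take_append_drop _ w
  have hylen : y.length = i₀ + 1 := by simp [hydef, List.length_take]; omega
  -- no peaks in s
  have hnps : ∀ k, isPeakB s k = false := by
    intro k
    by_contra hcon
    have hpk : isPeakB s k = true := by
      cases h : isPeakB s k
      · exact absurd h hcon
      · rfl
    obtain ⟨hl, h1, h2⟩ := isPeakB_elem _ _ hpk
    rw [List.getElem_drop] at h1 h2
    have hkl : i₀ + 1 + k + 1 < w.length := by
      have : k + 1 < s.length := hl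
      simp [hsdef] at this
      omega
    have hpk' : isPeakB w (i₀ + 1 + k) = true := by
      refine isPeakB_of_elem w _ hkl h1 ?_
      simpa [show i₀ + 1 + (k+1) = i₀ + 1 + k + 1 by omega] using h2
    have := hlast _ hpk'
    omega
  obtain ⟨p, q, hspq⟩ := no_peak_shape s hnps
  have hgt_s : ∀ j, hgt w (i₀ + 1 + j) = (a : ℤ) + hgt s j := by
    intro j
    conv_lhs => rw [← hys]
    rw [show i₀ + 1 + j = y.length + j by omega, hgt_append_ge,
      hydef, hgt_length_take w (i₀+1) (by omega), hgt₀]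
  have hslen : s.length = p + q := by simp [hspq]
  have hsum : hgt s (p + q) = -(p : ℤ) + q := by
    rw [hspq, show p + q = (List.replicate p false).length + q by simp,
      hgt_append_ge, hgt_replicate_false, hgt_replicate_true]
    simp
  have hsend : hgt s s.length = -(a : ℤ) := by
    have h1 := hgt_s s.length
    rw [show i₀ + 1 + s.length = w.length by simp [hsdef]; omega, hend0] at h1
    omega
  have hp_le : (p : ℤ) ≤ a := by
    have h1 := h0 (i₀ + 1 + p)
    have h2 : hgt s p = -(p : ℤ) := by
      rw [hspq, hgt_append_le _ _ _ (by simp), hgt_replicate_false]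
      simp
    rw [hgt_s p, h2] at h1
    omega
  have hpq : p = a ∧ q = 0 := by
    rw [hslen, hsum] at hsend
    constructor <;> omega
  have hsrep : s = List.replicate a false := by
    rw [hspq, hpq.1, hpq.2]
    simp
  -- y hypotheses
  have hgt_y : ∀ j ≤ i₀ + 1, hgt y j = hgt w j := fun j hj => hgt_take w (i₀+1) j hj
  have h0y : ∀ j, 0 ≤ hgt y j := by
    intro j
    rcases le_or_gt j (i₀ + 1) with h | h
    · rw [hgt_y j h]; exact h0 j
    · rw [hgt_of_ge y j (by omega), hylen, hgt_y _ le_rfl, hgt₀]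
      positivity
  have hendy : hgt y y.length = (a : ℤ) := by
    rw [hylen, hgt_y _ le_rfl, hgt₀]
  have hpky : ∀ i, isPeakB y i = true ↔ (i + 1 < i₀ + 1 ∧ isPeakB w i = true) :=
    fun i => peak_take w (i₀+1) i (by omega)
  have hpwy : ∀ i i', isPeakB y i = true → isPeakB y i' = true → i < i' →
      hgt y (i+1) < hgt y (i'+1) := by
    intro i i' h h' hii
    obtain ⟨h1, h2⟩ := (hpky i).mp h
    obtain ⟨h1', h2'⟩ := (hpky i').mp h'
    rw [hgt_y (i+1) (by omega), hgt_y (i'+1) (by omega)]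
    exact hpw i i' h2 h2' hii
  have hbdy : ∀ i, isPeakB y i = true → hgt y (i+1) < (a : ℤ) := by
    intro i h
    obtain ⟨h1, h2⟩ := (hpky i).mp h
    rw [hgt_y (i+1) (by omega)]
    have := hpw i i₀ h2 hpk₀ (by omega)
    rwa [hgt₀] at this
  obtain ⟨js, ⟨hjlen, hjbd, hjeq⟩, hjun⟩ :=
    key y.length y a le_rfl ha h0y hendy hpwy hbdy
  refine ⟨js, ⟨hjlen, hjbd, ?_⟩, ?_⟩
  · rw [buildIncr_eq, ← hjeq, ← hsrep, hys]
  · rintro js₂ ⟨hlen₂, hbd₂, heq₂⟩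
    refine hjun js₂ ⟨hlen₂, hbd₂, ?_⟩
    rw [buildIncr_eq, ← hsrep] at heq₂
    rw [← hys] at heq₂
    exact List.append_cancel_right heq₂.symm |>.symm
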